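/- Suppose G ∈ L²(γ) and additionally G(·±M) ∈ L²(γ) for some M > 0. Then for |x| < M and every m ≥ 0, the m-th derivative of G_∞(x) = E[G(Z+x)] satisfies G_∞^{(m)}(x) = E[G(Z+x) H_m(Z)]. -/

import Mathlib

open MeasureTheory Real

noncomputable def stdPhi (x : ℝ) : ℝ := (Real.sqrt (2 * Real.pi))⁻¹ * Real.exp (-x ^ 2 / 2)

noncomputable def hermiteEval (m : ℕ) (z : ℝ) : ℝ :=
  Polynomial.aeval z (Polynomial.hermite m)

noncomputable def hermR (m : ℕ) : Polynomial ℝ :=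
  (Polynomial.hermite m).map (algebraMap ℤ ℝ)

lemma hermiteEval_eq_eval (m : ℕ) (t : ℝ) :
    hermiteEval m t = Polynomial.eval t (hermR m) := by
  rw [hermiteEval, hermR, Polynomial.eval_map, Polynomial.aeval_def]

lemma hermR_succ (m : ℕ) :
    hermR (m + 1) = Polynomial.X * hermR m - Polynomial.derivative (hermR m) := by
  simp only [hermR, Polynomial.hermite_succ, Polynomial.map_sub, Polynomial.map_mul,
    Polynomial.map_X, Polynomial.derivative_map]

lemma stdPhi_pos (x : ℝ) : 0 < stdPhi x := by
  have h2 : 0 < Real.sqrt (2 * Real.pi) := Real.sqrt_pos.mpr (by positivity)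
  unfold stdPhi; positivity

lemma continuous_stdPhi : Continuous stdPhi := by
  unfold stdPhi; continuity

lemma continuous_hermiteEval (m : ℕ) : Continuous (hermiteEval m) := by
  unfold hermiteEval
  exact Polynomial.continuous_aeval _

lemma hasDerivAt_stdPhi (t : ℝ) : HasDerivAt stdPhi (-t * stdPhi t) t := by
  have h : HasDerivAt (fun x : ℝ => -x ^ 2 / 2) (-t) t := by
    have := ((hasDerivAt_pow 2 t).neg.div_const 2)
    refine this.congr_deriv ?_
    ring
  have h2 := (h.exp).const_mul ((Real.sqrt (2 * Real.pi))⁻¹)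
  refine h2.congr_deriv ?_
  unfold stdPhi; ring

lemma hasDerivAt_hermGauss (m : ℕ) (t : ℝ) :
    HasDerivAt (fun s => hermiteEval m s * stdPhi s)
      (-(hermiteEval (m + 1) t * stdPhi t)) t := by
  have h1 : HasDerivAt (fun s => hermiteEval m s)
      (Polynomial.eval t (Polynomial.derivative (hermR m))) t := by
    simp only [hermiteEval_eq_eval]
    exact Polynomial.hasDerivAt _ t
  have h2 := h1.mul (hasDerivAt_stdPhi t)
  refine h2.congr_deriv ?_
  rw [hermiteEval_eq_eval, hermiteEval_eq_eval, hermR_succ]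
  simp only [Polynomial.eval_sub, Polynomial.eval_mul, Polynomial.eval_X]
  ring

lemma hasDerivAt_inner (G : ℝ → ℝ) (m : ℕ) (u y : ℝ) :
    HasDerivAt (fun s => G u * (hermiteEval m (u - s) * stdPhi (u - s)))
      (G u * (hermiteEval (m + 1) (u - y) * stdPhi (u - y))) y := by
  have hi : HasDerivAt (fun s : ℝ => u - s) (-1) y := (hasDerivAt_id y).const_sub u
  have := (hasDerivAt_hermGauss m (u - y)).comp y hi
  have h2 := this.const_mul (G u)
  refine h2.congr_deriv ?_
  ring

lemma integrable_stdPhi : Integrable stdPhi := by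
  have h0 : Integrable fun x : ℝ => Real.exp (-(1/2 : ℝ) * x ^ 2) :=
    integrable_exp_neg_mul_sq (by norm_num)
  have h := h0.const_mul ((Real.sqrt (2 * Real.pi))⁻¹)
  apply h.congr
  filter_upwards with x
  unfold stdPhi
  ring_nf

lemma integrable_even_moment (d : ℕ) :
    Integrable fun x : ℝ => x ^ (2 * d) * Real.exp (-x ^ 2 / 2) := by
  have hint : Integrable fun x : ℝ => Real.exp (-(1/4) * x ^ 2) :=
    integrable_exp_neg_mul_sq (by norm_num)
  apply Integrable.mono' (hint.const_mul ((4 : ℝ) ^ d * (Nat.factorial d : ℝ)))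
  · apply Measurable.aestronglyMeasurable
    exact (measurable_id.pow_const _).mul
      (((measurable_id.pow_const 2).neg.div_const 2).exp)
  · filter_upwards with x
    have hx2 : (0:ℝ) ≤ x ^ 2 / 4 := by positivity
    have key : (x ^ 2 / 4) ^ d / (Nat.factorial d : ℝ) ≤ Real.exp (x ^ 2 / 4) :=
      Real.pow_div_factorial_le_exp _ hx2 d
    have hfac : (0:ℝ) < (Nat.factorial d : ℝ) := by positivity
    have hxpow : x ^ (2 * d) ≤ 4 ^ d * (Nat.factorial d : ℝ) * Real.exp (x ^ 2 / 4) := by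
      have h1 : x ^ (2 * d) = (x ^ 2) ^ d := by rw [pow_mul]
      have h2 : (x ^ 2) ^ d = 4 ^ d * (x ^ 2 / 4) ^ d := by
        rw [div_pow]; field_simp
      calc x ^ (2 * d) = 4 ^ d * (x ^ 2 / 4) ^ d := by rw [h1, h2]
        _ ≤ 4 ^ d * ((Nat.factorial d : ℝ) * Real.exp (x ^ 2 / 4)) := by
            apply mul_le_mul_of_nonneg_left _ (by positivity)
            rw [div_le_iff₀ hfac] at key
            linarith [key]
        _ = 4 ^ d * (Nat.factorial d : ℝ) * Real.exp (x ^ 2 / 4) := by ring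
    have hnn : (0:ℝ) ≤ x ^ (2 * d) := by
      have : x ^ (2 * d) = (x ^ 2) ^ d := by rw [pow_mul]
      rw [this]; positivity
    rw [Real.norm_eq_abs, abs_mul, abs_of_nonneg hnn, abs_of_nonneg (Real.exp_pos _).le]
    calc x ^ (2 * d) * Real.exp (-x ^ 2 / 2)
        ≤ (4 ^ d * (Nat.factorial d : ℝ) * Real.exp (x ^ 2 / 4)) * Real.exp (-x ^ 2 / 2) := by
          apply mul_le_mul_of_nonneg_right hxpow (Real.exp_pos _).le
      _ = 4 ^ d * (Nat.factorial d : ℝ) * Real.exp (-(1/4) * x ^ 2) := by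
          rw [mul_assoc, ← Real.exp_add]; ring_nf

lemma integrable_even_moment_stdPhi (d : ℕ) :
    Integrable fun x : ℝ => x ^ (2 * d) * stdPhi x := by
  have h := (integrable_even_moment d).const_mul ((Real.sqrt (2 * Real.pi))⁻¹)
  apply h.congr
  filter_upwards with x
  unfold stdPhi; ring

lemma even_pow_add_le (d : ℕ) (a b : ℝ) :
    (a + b) ^ (2 * d) ≤ 2 ^ (2 * d) * (a ^ (2 * d) + b ^ (2 * d)) := by
  have habs : ∀ x : ℝ, x ^ (2 * d) = |x| ^ (2 * d) := fun x => by
    rw [← abs_pow, abs_of_nonneg (by rw [pow_mul]; positivity)]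
  rw [habs (a + b), habs a, habs b]
  have h1 : |a + b| ≤ |a| + |b| := abs_add_le a b
  have h2 : |a| + |b| ≤ 2 * max |a| |b| := by
    rcases le_total |a| |b| with h | h
    · rw [max_eq_right h]; linarith
    · rw [max_eq_left h]; linarith
  calc |a + b| ^ (2 * d) ≤ (2 * max |a| |b|) ^ (2 * d) :=
        pow_le_pow_left₀ (abs_nonneg _) (h1.trans h2) _
    _ = 2 ^ (2 * d) * (max |a| |b|) ^ (2 * d) := by rw [mul_pow]
    _ ≤ 2 ^ (2 * d) * (|a| ^ (2 * d) + |b| ^ (2 * d)) := by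
        apply mul_le_mul_of_nonneg_left _ (by positivity)
        rcases le_total |a| |b| with h | h
        · rw [max_eq_right h]
          have : (0:ℝ) ≤ |a| ^ (2*d) := by positivity
          linarith
        · rw [max_eq_left h]
          have : (0:ℝ) ≤ |b| ^ (2*d) := by positivity
          linarith

lemma integrable_even_moment_shift (d : ℕ) (c : ℝ) :
    Integrable fun u : ℝ => u ^ (2 * d) * stdPhi (u - c) := by
  have base : Integrable fun v : ℝ => (v + c) ^ (2 * d) * stdPhi v := by
    have hint : Integrable fun v : ℝ =>
        2 ^ (2 * d) * (v ^ (2 * d) * stdPhi v) + (2 ^ (2 * d) * c ^ (2 * d)) * stdPhi v :=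
      ((integrable_even_moment_stdPhi d).const_mul _).add (integrable_stdPhi.const_mul _)
    apply hint.mono'
    · apply Measurable.aestronglyMeasurable
      exact ((measurable_id.add_const c).pow_const _).mul continuous_stdPhi.measurable
    · filter_upwards with v
      have hnn : (0:ℝ) ≤ (v + c) ^ (2 * d) := by rw [pow_mul]; positivity
      rw [Real.norm_eq_abs, abs_mul, abs_of_nonneg hnn,
        abs_of_nonneg (stdPhi_pos v).le]
      have := even_pow_add_le d v c
      have h2 := mul_le_mul_of_nonneg_right this (stdPhi_pos v).le
      calc (v + c) ^ (2 * d) * stdPhi v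
          ≤ 2 ^ (2 * d) * (v ^ (2 * d) + c ^ (2 * d)) * stdPhi v := h2
        _ = 2 ^ (2 * d) * (v ^ (2 * d) * stdPhi v)
            + 2 ^ (2 * d) * c ^ (2 * d) * stdPhi v := by ring
  have := base.comp_sub_right c
  apply this.congr
  filter_upwards with u
  simp

lemma stdPhi_translate_le {M : ℝ} (u y : ℝ) (hy : |y| ≤ M) :
    stdPhi (u - y) ≤ Real.exp (M ^ 2 / 2) * (stdPhi (u - M) + stdPhi (u + M)) := by
  obtain ⟨hy1, hy2⟩ := abs_le.mp hy
  have hc : 0 < (Real.sqrt (2 * Real.pi))⁻¹ := by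
    have : 0 < Real.sqrt (2 * Real.pi) := Real.sqrt_pos.mpr (by positivity)
    positivity
  rcases le_total 0 u with hu | hu
  · have hexp : Real.exp (-(u - y) ^ 2 / 2)
        ≤ Real.exp (M ^ 2 / 2) * Real.exp (-(u - M) ^ 2 / 2) := by
      rw [← Real.exp_add]
      apply Real.exp_le_exp.mpr
      nlinarith [sq_nonneg y, mul_nonneg hu (sub_nonneg.mpr hy2)]
    unfold stdPhi
    have h2 : (0:ℝ) ≤ (Real.sqrt (2 * Real.pi))⁻¹ * Real.exp (-(u + M) ^ 2 / 2) := by positivity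
    calc (Real.sqrt (2 * Real.pi))⁻¹ * Real.exp (-(u - y) ^ 2 / 2)
        ≤ (Real.sqrt (2 * Real.pi))⁻¹ * (Real.exp (M ^ 2 / 2) * Real.exp (-(u - M) ^ 2 / 2)) :=
          mul_le_mul_of_nonneg_left hexp hc.le
      _ ≤ Real.exp (M ^ 2 / 2) * ((Real.sqrt (2 * Real.pi))⁻¹ * Real.exp (-(u - M) ^ 2 / 2)
            + (Real.sqrt (2 * Real.pi))⁻¹ * Real.exp (-(u + M) ^ 2 / 2)) := by
          nlinarith [Real.exp_pos (M ^ 2 / 2), h2]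
  · have hexp : Real.exp (-(u - y) ^ 2 / 2)
        ≤ Real.exp (M ^ 2 / 2) * Real.exp (-(u + M) ^ 2 / 2) := by
      rw [← Real.exp_add]
      apply Real.exp_le_exp.mpr
      nlinarith [sq_nonneg y, mul_nonneg (neg_nonneg.mpr hu) (by linarith : (0:ℝ) ≤ M + y)]
    unfold stdPhi
    have h2 : (0:ℝ) ≤ (Real.sqrt (2 * Real.pi))⁻¹ * Real.exp (-(u - M) ^ 2 / 2) := by positivity
    calc (Real.sqrt (2 * Real.pi))⁻¹ * Real.exp (-(u - y) ^ 2 / 2)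
        ≤ (Real.sqrt (2 * Real.pi))⁻¹ * (Real.exp (M ^ 2 / 2) * Real.exp (-(u + M) ^ 2 / 2)) :=
          mul_le_mul_of_nonneg_left hexp hc.le
      _ ≤ Real.exp (M ^ 2 / 2) * ((Real.sqrt (2 * Real.pi))⁻¹ * Real.exp (-(u - M) ^ 2 / 2)
            + (Real.sqrt (2 * Real.pi))⁻¹ * Real.exp (-(u + M) ^ 2 / 2)) := by
          nlinarith [Real.exp_pos (M ^ 2 / 2), h2]

lemma hermiteEval_growth_bound (k : ℕ) :
    ∃ A : ℝ, 0 ≤ A ∧ ∀ t s : ℝ, |t| ≤ s →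
      |hermiteEval k t| ≤ A * (s + 1) ^ (hermR k).natDegree := by
  classical
  set p := hermR k with hp
  set D := p.natDegree with hD
  refine ⟨∑ i ∈ Finset.range (D + 1), |p.coeff i|, Finset.sum_nonneg fun i _ => abs_nonneg _,
    fun t s hts => ?_⟩
  have hs : 0 ≤ s := le_trans (abs_nonneg t) hts
  have hs1 : (1:ℝ) ≤ s + 1 := by linarith
  rw [hermiteEval_eq_eval, ← hp, Polynomial.eval_eq_sum_range]
  calc |∑ i ∈ Finset.range (D + 1), p.coeff i * t ^ i|
      ≤ ∑ i ∈ Finset.range (D + 1), |p.coeff i * t ^ i| := Finset.abs_sum_le_sum_abs _ _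
    _ ≤ ∑ i ∈ Finset.range (D + 1), |p.coeff i| * (s + 1) ^ D := by
        apply Finset.sum_le_sum
        intro i hi
        rw [abs_mul, abs_pow]
        apply mul_le_mul_of_nonneg_left _ (abs_nonneg _)
        calc |t| ^ i ≤ (s + 1) ^ i :=
              pow_le_pow_left₀ (abs_nonneg t) (by linarith) i
          _ ≤ (s + 1) ^ D :=
              pow_le_pow_right₀ hs1 (Nat.lt_succ_iff.mp (Finset.mem_range.mp hi))
    _ = (∑ i ∈ Finset.range (D + 1), |p.coeff i|) * (s + 1) ^ D := by
        rw [Finset.sum_mul]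

section Main

variable (G : ℝ → ℝ) (M : ℝ)

/-- integrability of `G²ψ` where `ψ(u) = φ(u-M) + φ(u+M)` -/
lemma integrable_G_sq_psi (hplus : Integrable (fun z => (G (z + M)) ^ 2 * stdPhi z))
    (hminus : Integrable (fun z => (G (z - M)) ^ 2 * stdPhi z)) :
    Integrable fun u => (G u) ^ 2 * (stdPhi (u - M) + stdPhi (u + M)) := by
  have h1 : Integrable fun u => (G u) ^ 2 * stdPhi (u - M) := by
    have := hplus.comp_sub_right M
    apply this.congr
    filter_upwards with u
    simp
  have h2 : Integrable fun u => (G u) ^ 2 * stdPhi (u + M) := by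
    have := hminus.comp_add_right M
    apply this.congr
    filter_upwards with u
    simp
  have := h1.add h2
  apply this.congr
  filter_upwards with u
  simp only [Pi.add_apply]
  ring

lemma integrable_pow_psi (d : ℕ) :
    Integrable fun u => (|u| + M + 1) ^ (2 * d) * (stdPhi (u - M) + stdPhi (u + M)) := by
  have hψm : Integrable fun u : ℝ => stdPhi (u - M) := integrable_stdPhi.comp_sub_right M
  have hψp : Integrable fun u : ℝ => stdPhi (u + M) := integrable_stdPhi.comp_add_right M
  have hm : Integrable fun u : ℝ => u ^ (2 * d) * stdPhi (u - M) :=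
    integrable_even_moment_shift d M
  have hp : Integrable fun u : ℝ => u ^ (2 * d) * stdPhi (u + M) := by
    have := integrable_even_moment_shift d (-M)
    apply this.congr
    filter_upwards with u
    rw [sub_neg_eq_add]
  have hint : Integrable fun u : ℝ =>
      2 ^ (2 * d) * (u ^ (2 * d) * stdPhi (u - M) + u ^ (2 * d) * stdPhi (u + M))
      + (2 ^ (2 * d) * (M + 1) ^ (2 * d)) * (stdPhi (u - M) + stdPhi (u + M)) :=
    (((hm.add hp)).const_mul _).add ((hψm.add hψp).const_mul _)
  apply hint.mono'
  · apply Measurable.aestronglyMeasurable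
    apply Measurable.mul
    · exact ((measurable_abs.add_const M).add_const 1).pow_const _
    · exact (continuous_stdPhi.measurable.comp (measurable_id.sub_const M)).add
        (continuous_stdPhi.measurable.comp (measurable_id.add_const M))
  · filter_upwards with u
    have hψnn : (0:ℝ) ≤ stdPhi (u - M) + stdPhi (u + M) :=
      add_nonneg (stdPhi_pos _).le (stdPhi_pos _).le
    have hnn : (0:ℝ) ≤ (|u| + M + 1) ^ (2 * d) := by rw [pow_mul]; positivity
    rw [Real.norm_eq_abs, abs_mul, abs_of_nonneg hnn, abs_of_nonneg hψnn]
    have hb : (|u| + M + 1) ^ (2 * d) ≤ 2 ^ (2 * d) * (u ^ (2 * d) + (M + 1) ^ (2 * d)) := by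
      have := even_pow_add_le d |u| (M + 1)
      have habs : |u| ^ (2 * d) = u ^ (2 * d) := by
        rw [← abs_pow, abs_of_nonneg (by rw [pow_mul]; positivity)]
      calc (|u| + M + 1) ^ (2 * d) = (|u| + (M + 1)) ^ (2 * d) := by ring_nf
        _ ≤ 2 ^ (2 * d) * (|u| ^ (2 * d) + (M + 1) ^ (2 * d)) := this
        _ = 2 ^ (2 * d) * (u ^ (2 * d) + (M + 1) ^ (2 * d)) := by rw [habs]
    calc (|u| + M + 1) ^ (2 * d) * (stdPhi (u - M) + stdPhi (u + M))
        ≤ 2 ^ (2 * d) * (u ^ (2 * d) + (M + 1) ^ (2 * d))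
            * (stdPhi (u - M) + stdPhi (u + M)) :=
          mul_le_mul_of_nonneg_right hb hψnn
      _ = 2 ^ (2 * d) * (u ^ (2 * d) * stdPhi (u - M) + u ^ (2 * d) * stdPhi (u + M))
          + (2 ^ (2 * d) * (M + 1) ^ (2 * d)) * (stdPhi (u - M) + stdPhi (u + M)) := by ring

/-- the master dominating function -/
lemma master_bound (hplus : Integrable (fun z => (G (z + M)) ^ 2 * stdPhi z))
    (hminus : Integrable (fun z => (G (z - M)) ^ 2 * stdPhi z)) (k : ℕ) :
    ∃ bound : ℝ → ℝ, Integrable bound ∧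
      ∀ u y : ℝ, |y| ≤ M → |G u * (hermiteEval k (u - y) * stdPhi (u - y))| ≤ bound u := by
  obtain ⟨A, hA, hAb⟩ := hermiteEval_growth_bound k
  set D := (hermR k).natDegree with hD
  set e := Real.exp (M ^ 2 / 2) with he
  refine ⟨fun u => e * (((G u) ^ 2 + A ^ 2 * (|u| + M + 1) ^ (2 * D))
      * (stdPhi (u - M) + stdPhi (u + M))), ?_, ?_⟩
  · have h1 := (integrable_G_sq_psi G M hplus hminus).const_mul e
    have h2 := (integrable_pow_psi M D).const_mul (e * A ^ 2)
    apply (h1.add h2).congr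
    filter_upwards with u
    simp only [Pi.add_apply]
    ring
  · intro u y hy
    have hψnn : (0:ℝ) ≤ stdPhi (u - M) + stdPhi (u + M) :=
      add_nonneg (stdPhi_pos _).le (stdPhi_pos _).le
    have habs : |G u * (hermiteEval k (u - y) * stdPhi (u - y))|
        = |G u| * |hermiteEval k (u - y)| * stdPhi (u - y) := by
      rw [abs_mul, abs_mul, abs_of_nonneg (stdPhi_pos _).le, mul_assoc]
    rw [habs]
    have hts : |u - y| ≤ |u| + M :=
      (abs_sub _ _).trans (by linarith [hy] : |u| + |y| ≤ |u| + M)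
    have hH : |hermiteEval k (u - y)| ≤ A * (|u| + M + 1) ^ D := hAb _ _ hts
    have hP : (0:ℝ) ≤ (|u| + M + 1) ^ D := by
      have h0 : (0:ℝ) ≤ |u| + M + 1 := by
        have := abs_nonneg u
        have := abs_nonneg y
        nlinarith [hy, abs_nonneg y]
      positivity
    -- |G u| * |H| ≤ G² + A²P^{2D}
    have hprod : |G u| * |hermiteEval k (u - y)|
        ≤ (G u) ^ 2 + A ^ 2 * (|u| + M + 1) ^ (2 * D) := by
      have h1 : |G u| * |hermiteEval k (u - y)| ≤ |G u| * (A * (|u| + M + 1) ^ D) :=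
        mul_le_mul_of_nonneg_left hH (abs_nonneg _)
      have h2 : |G u| * (A * (|u| + M + 1) ^ D)
          ≤ |G u| ^ 2 + (A * (|u| + M + 1) ^ D) ^ 2 := by
        nlinarith [sq_nonneg (|G u| - A * (|u| + M + 1) ^ D),
          mul_nonneg (abs_nonneg (G u)) (mul_nonneg hA hP)]
      have h3 : |G u| ^ 2 + (A * (|u| + M + 1) ^ D) ^ 2
          = (G u) ^ 2 + A ^ 2 * (|u| + M + 1) ^ (2 * D) := by
        rw [sq_abs, mul_pow, ← pow_mul]
        ring_nf
      linarith [h1, h2.trans_eq h3]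
    have hφ : stdPhi (u - y) ≤ e * (stdPhi (u - M) + stdPhi (u + M)) :=
      stdPhi_translate_le u y hy
    have hGHnn : (0:ℝ) ≤ |G u| * |hermiteEval k (u - y)| :=
      mul_nonneg (abs_nonneg _) (abs_nonneg _)
    calc |G u| * |hermiteEval k (u - y)| * stdPhi (u - y)
        ≤ ((G u) ^ 2 + A ^ 2 * (|u| + M + 1) ^ (2 * D)) * stdPhi (u - y) :=
          mul_le_mul_of_nonneg_right hprod (stdPhi_pos _).le
      _ ≤ ((G u) ^ 2 + A ^ 2 * (|u| + M + 1) ^ (2 * D))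
            * (e * (stdPhi (u - M) + stdPhi (u + M))) := by
          apply mul_le_mul_of_nonneg_left hφ
          have : (0:ℝ) ≤ A ^ 2 * (|u| + M + 1) ^ (2 * D) := by
            rw [pow_mul]; positivity
          nlinarith [sq_nonneg (G u)]
      _ = e * (((G u) ^ 2 + A ^ 2 * (|u| + M + 1) ^ (2 * D))
            * (stdPhi (u - M) + stdPhi (u + M))) := by ring

lemma measurable_Fk (hmeas : Measurable G) (k : ℕ) (y : ℝ) :
    Measurable fun u => G u * (hermiteEval k (u - y) * stdPhi (u - y)) := by
  apply hmeas.mul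
  apply Measurable.mul
  · exact (continuous_hermiteEval k).measurable.comp (measurable_id.sub_const y)
  · exact continuous_stdPhi.measurable.comp (measurable_id.sub_const y)

lemma integrable_Fk (hmeas : Measurable G)
    (hplus : Integrable (fun z => (G (z + M)) ^ 2 * stdPhi z))
    (hminus : Integrable (fun z => (G (z - M)) ^ 2 * stdPhi z))
    (k : ℕ) (y : ℝ) (hy : |y| ≤ M) :
    Integrable fun u => G u * (hermiteEval k (u - y) * stdPhi (u - y)) := by
  obtain ⟨bound, hbi, hb⟩ := master_bound G M hplus hminus k
  apply hbi.mono' (measurable_Fk G hmeas k y).aestronglyMeasurable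
  filter_upwards with u
  rw [Real.norm_eq_abs]
  exact hb u y hy

lemma hasDerivAt_main (hmeas : Measurable G) (hM : 0 < M)
    (hplus : Integrable (fun z => (G (z + M)) ^ 2 * stdPhi z))
    (hminus : Integrable (fun z => (G (z - M)) ^ 2 * stdPhi z))
    (m : ℕ) (x : ℝ) (hx : |x| < M) :
    HasDerivAt (fun y => ∫ u : ℝ, G u * (hermiteEval m (u - y) * stdPhi (u - y)))
      (∫ u : ℝ, G u * (hermiteEval (m + 1) (u - x) * stdPhi (u - x))) x := by
  obtain ⟨bound, hbi, hb⟩ := master_bound G M hplus hminus (m + 1)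
  have hε : (0:ℝ) < M - |x| := by linarith
  have hball : ∀ y ∈ Metric.ball x (M - |x|), |y| ≤ M := by
    intro y hy
    have : |y - x| < M - |x| := by
      rw [Metric.mem_ball, Real.dist_eq] at hy
      exact hy
    calc |y| = |y - x + x| := by ring_nf
      _ ≤ |y - x| + |x| := abs_add_le _ _
      _ ≤ M := by linarith
  have key := hasDerivAt_integral_of_dominated_loc_of_deriv_le
    (F := fun y u => G u * (hermiteEval m (u - y) * stdPhi (u - y)))
    (F' := fun y u => G u * (hermiteEval (m + 1) (u - y) * stdPhi (u - y)))
    (bound := bound) (μ := volume) (x₀ := x) (Metric.ball_mem_nhds x hε)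
    (Filter.Eventually.of_forall fun y => (measurable_Fk G hmeas m y).aestronglyMeasurable)
    (integrable_Fk G M hmeas hplus hminus m x (le_of_lt hx))
    ((measurable_Fk G hmeas (m + 1) x).aestronglyMeasurable)
    (Filter.Eventually.of_forall fun u => fun y hy => by
      rw [Real.norm_eq_abs]
      exact hb u y (hball y hy))
    hbi
    (Filter.Eventually.of_forall fun u => fun y _ => hasDerivAt_inner G m u y)
  exact key.2

lemma integral_shift_eq (k : ℕ) (y : ℝ) :
    ∫ z : ℝ, G (z + y) * hermiteEval k z * stdPhi z
      = ∫ u : ℝ, G u * (hermiteEval k (u - y) * stdPhi (u - y)) := by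
  have h := integral_add_right_eq_self (μ := volume)
    (fun u => G u * (hermiteEval k (u - y) * stdPhi (u - y))) y
  rw [← h]
  congr 1
  funext z
  simp only [add_sub_cancel_right]
  ring

end Main

/-- If `G ∈ L²(γ)` and `G(·±M) ∈ L²(γ)` for some `M > 0`, then for `|x| < M`
the `m`-th derivative of `G_∞(x) = E[G(Z+x)]` equals `E[G(Z+x) H_m(Z)]`. -/
theorem weierstrass_transform_derivatives
    (G : ℝ → ℝ) (hmeas : Measurable G) (M : ℝ) (hM : 0 < M)
    (hL2 : Integrable (fun z => (G z) ^ 2 * stdPhi z))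
    (hplus : Integrable (fun z => (G (z + M)) ^ 2 * stdPhi z))
    (hminus : Integrable (fun z => (G (z - M)) ^ 2 * stdPhi z)) :
    ∀ m : ℕ, ∀ x : ℝ, |x| < M →
      iteratedDeriv m (fun y => ∫ z : ℝ, G (z + y) * stdPhi z) x
        = ∫ z : ℝ, G (z + x) * hermiteEval m z * stdPhi z := by
  -- rewrite everything in terms of Φ k y := ∫ u, G u * (H_k(u-y) φ(u-y))
  set Φ : ℕ → ℝ → ℝ :=
    fun k y => ∫ u : ℝ, G u * (hermiteEval k (u - y) * stdPhi (u - y)) with hΦ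
  have hF0 : (fun y => ∫ z : ℝ, G (z + y) * stdPhi z) = Φ 0 := by
    funext y
    rw [hΦ]
    have h1 : ∫ z : ℝ, G (z + y) * stdPhi z
        = ∫ z : ℝ, G (z + y) * hermiteEval 0 z * stdPhi z := by
      congr 1
      funext z
      simp [hermiteEval, Polynomial.hermite_zero]
    rw [h1, integral_shift_eq]
  have main : ∀ m : ℕ, ∀ x : ℝ, |x| < M → iteratedDeriv m (Φ 0) x = Φ m x := by
    intro m
    induction m with
    | zero => intro x _; simp [iteratedDeriv_zero]
    | succ m ih =>
      intro x hx
      rw [iteratedDeriv_succ]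
      have hopen : IsOpen {y : ℝ | |y| < M} := by
        have : {y : ℝ | |y| < M} = abs ⁻¹' Set.Iio M := rfl
        rw [this]
        exact continuous_abs.isOpen_preimage _ isOpen_Iio
      have hmem : {y : ℝ | |y| < M} ∈ nhds x := hopen.mem_nhds hx
      have hEq : (iteratedDeriv m (Φ 0)) =ᶠ[nhds x] Φ m := by
        filter_upwards [hmem] with y hy
        exact ih y hy
      rw [hEq.deriv_eq]
      exact (hasDerivAt_main G M hmeas hM hplus hminus m x hx).deriv
  intro m x hx
  rw [hF0, main m x hx, integral_shift_eq]
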